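/- Let U and V be strongly continuous one-parameter unitary groups on the same Hilbert space L, and let C, D ≥ 0. If ‖U(t) − V(t)‖ ≤ C·t + D·t² for all positive t in some neighborhood of 0, then ‖U(t) − V(t)‖ ≤ C·|t| for all t ∈ ℝ. -/

import Mathlib

open scoped ComplexConjugate

/-- A (strongly continuous) one-parameter unitary group on a complex Hilbert space `L`:
a homomorphism `ℝ → U(L)` that is continuous in the strong operator topology. -/
def IsOneParamUnitaryGroup {L : Type*} [NormedAddCommGroup L] [InnerProductSpace ℂ L]
    [CompleteSpace L] (U : ℝ → (L →L[ℂ] L)) : Prop :=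
  U 0 = 1 ∧ (∀ s t : ℝ, U (s + t) = U s * U t) ∧
    (∀ t : ℝ, U t ∈ unitary (L →L[ℂ] L)) ∧ ∀ x : L, Continuous fun t : ℝ => U t x

lemma unitary_norm_le_one {L : Type*} [NormedAddCommGroup L] [InnerProductSpace ℂ L]
    [CompleteSpace L] (u : L →L[ℂ] L) (hu : u ∈ unitary (L →L[ℂ] L)) : ‖u‖ ≤ 1 := by
  have h1 : star u * u = 1 := hu.1
  have h2 : ‖star u * u‖ = ‖u‖ * ‖u‖ := CStarRing.norm_star_mul_self
  rw [h1] at h2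
  have h3 : ‖(1 : L →L[ℂ] L)‖ ≤ 1 := ContinuousLinearMap.norm_id_le
  nlinarith [norm_nonneg u]

lemma telescope_bound {L : Type*} [NormedAddCommGroup L] [InnerProductSpace ℂ L]
    [CompleteSpace L] (U V : ℝ → (L →L[ℂ] L))
    (hU : IsOneParamUnitaryGroup U) (hV : IsOneParamUnitaryGroup V) (s : ℝ) :
    ∀ n : ℕ, ‖U (n * s) - V (n * s)‖ ≤ n * ‖U s - V s‖ := by
  intro n
  induction n with
  | zero => simp [hU.1, hV.1]
  | succ n ih =>
    have hn : ((n + 1 : ℕ) : ℝ) * s = s + n * s := by push_cast; ring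
    rw [hn, hU.2.1, hV.2.1]
    have key : U s * U (n * s) - V s * V (n * s)
        = U s * (U (n * s) - V (n * s)) + (U s - V s) * V (n * s) := by
      noncomm_ring
    rw [key]
    calc ‖U s * (U (n * s) - V (n * s)) + (U s - V s) * V (n * s)‖
        ≤ ‖U s * (U (n * s) - V (n * s))‖ + ‖(U s - V s) * V (n * s)‖ := norm_add_le _ _
      _ ≤ ‖U s‖ * ‖U (n * s) - V (n * s)‖ + ‖U s - V s‖ * ‖V (n * s)‖ := by
          gcongr <;> exact norm_mul_le _ _
      _ ≤ 1 * (n * ‖U s - V s‖) + ‖U s - V s‖ * 1 :=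
          add_le_add
            (mul_le_mul (unitary_norm_le_one _ (hU.2.2.1 s)) ih (norm_nonneg _) zero_le_one)
            (mul_le_mul_of_nonneg_left (unitary_norm_le_one _ (hV.2.2.1 _)) (norm_nonneg _))
      _ = (n + 1 : ℕ) * ‖U s - V s‖ := by push_cast; ring

lemma neg_bound {L : Type*} [NormedAddCommGroup L] [InnerProductSpace ℂ L]
    [CompleteSpace L] (U V : ℝ → (L →L[ℂ] L))
    (hU : IsOneParamUnitaryGroup U) (hV : IsOneParamUnitaryGroup V) (t : ℝ) :
    ‖U (-t) - V (-t)‖ ≤ ‖U t - V t‖ := by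
  have key : V (-t) - U (-t) = U (-t) * (U t - V t) * V (-t) := by
    have h1 : U (-t) * U t = 1 := by rw [← hU.2.1]; simp [hU.1]
    have h2 : V t * V (-t) = 1 := by rw [← hV.2.1]; simp [hV.1]
    calc V (-t) - U (-t) = U (-t) * U t * V (-t) - U (-t) * (V t * V (-t)) := by
          rw [h1, h2]; noncomm_ring
      _ = U (-t) * (U t - V t) * V (-t) := by noncomm_ring
  have : ‖V (-t) - U (-t)‖ ≤ ‖U t - V t‖ := by
    rw [key]
    calc ‖U (-t) * (U t - V t) * V (-t)‖
        ≤ ‖U (-t) * (U t - V t)‖ * ‖V (-t)‖ := norm_mul_le _ _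
      _ ≤ ‖U (-t)‖ * ‖U t - V t‖ * ‖V (-t)‖ := by gcongr; exact norm_mul_le _ _
      _ ≤ ‖U t - V t‖ := by
          have a := unitary_norm_le_one _ (hU.2.2.1 (-t))
          have b := unitary_norm_le_one _ (hV.2.2.1 (-t))
          calc ‖U (-t)‖ * ‖U t - V t‖ * ‖V (-t)‖
              ≤ ‖U t - V t‖ * ‖V (-t)‖ :=
                mul_le_mul_of_nonneg_right
                  (mul_le_of_le_one_left (norm_nonneg _) a) (norm_nonneg _)
            _ ≤ ‖U t - V t‖ := mul_le_of_le_one_right (norm_nonneg _) b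
  rwa [← norm_neg, neg_sub] at this

/-- If `‖U(t) − V(t)‖ ≤ C·t + D·t²` for all positive `t` in some neighborhood
of `0`, then `‖U(t) − V(t)‖ ≤ C·|t|` for all `t ∈ ℝ`. -/
theorem forget_second_order_term {L : Type*} [NormedAddCommGroup L] [InnerProductSpace ℂ L]
    [CompleteSpace L] (U V : ℝ → (L →L[ℂ] L))
    (hU : IsOneParamUnitaryGroup U) (hV : IsOneParamUnitaryGroup V)
    (C D : ℝ) (hC : 0 ≤ C) (hD : 0 ≤ D)
    (h : ∃ ε > (0 : ℝ), ∀ t : ℝ, 0 < t → t < ε → ‖U t - V t‖ ≤ C * t + D * t ^ 2) :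
    ∀ t : ℝ, ‖U t - V t‖ ≤ C * |t| := by
  obtain ⟨ε, hε, hbd⟩ := h
  -- First prove the bound for positive t
  have pos_case : ∀ t : ℝ, 0 < t → ‖U t - V t‖ ≤ C * t := by
    intro t ht
    refine le_of_forall_pos_le_add ?_
    intro δ hδ
    obtain ⟨n, hn⟩ := exists_nat_gt (max (t / ε) (D * t ^ 2 / δ))
    have hn1 : (t / ε : ℝ) < n := lt_of_le_of_lt (le_max_left _ _) hn
    have hn2 : (D * t ^ 2 / δ : ℝ) < n := lt_of_le_of_lt (le_max_right _ _) hn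
    have hnpos : (0 : ℝ) < n := lt_trans (div_pos ht hε) hn1
    set s : ℝ := t / n with hs
    have hspos : 0 < s := div_pos ht hnpos
    have hslt : s < ε := by
      rw [hs, div_lt_iff₀ hnpos]
      rw [div_lt_iff₀ hε] at hn1
      linarith
    have hts : (n : ℝ) * s = t := by
      rw [hs]; field_simp [hnpos.ne']
    calc ‖U t - V t‖ = ‖U ((n : ℝ) * s) - V ((n : ℝ) * s)‖ := by rw [hts]
      _ ≤ n * ‖U s - V s‖ := telescope_bound U V hU hV s n
      _ ≤ n * (C * s + D * s ^ 2) := by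
          gcongr
          exact hbd s hspos hslt
      _ = C * t + D * t ^ 2 / n := by
          rw [hs]; field_simp
      _ ≤ C * t + δ := by
          have : D * t ^ 2 / n ≤ δ := by
            rw [div_le_iff₀ hnpos]
            rw [div_lt_iff₀ hδ] at hn2
            linarith
          linarith
  intro t
  rcases lt_trichotomy t 0 with htn | ht0 | htp
  · have := pos_case (-t) (by linarith)
    have h2 : ‖U t - V t‖ ≤ ‖U (-t) - V (-t)‖ := by
      have := neg_bound U V hU hV (-t)
      simpa using this
    rw [abs_of_neg htn]
    linarith
  · simp [ht0, hU.1, hV.1]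
  · rw [abs_of_pos htp]; exact pos_case t htp
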